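/- arXiv:1107.2620 — 4 statements merged into one kernel-verified Lean document; each statement's English description precedes it below -/
import Mathlib

section
/- For n ≥ 2, the function φ₁'(ξ) = (ξ^{-2n} + 2 + ξ^{2n})/ξ · ∫₀^ξ s^{2n+1}/(1+s^{2n})² ds satisfies the linear ODE φ₁'' + [(2n+1) − (2n−1)ξ^{2n}]/(ξ(1+ξ^{2n})) · φ₁' = 1 for all ξ > 0. -/
open intervalIntegral Filter Set


/-- For `n ≥ 2`, the function
`g(ξ) = (ξ^{-2n} + 2 + ξ^{2n})/ξ · ∫₀^ξ s^{2n+1}/(1+s^{2n})² ds`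
satisfies `g' + [(2n+1) − (2n−1)ξ^{2n}]/(ξ(1+ξ^{2n})) · g = 1` for all `ξ > 0`
(i.e. `φ₁' = g` solves the ODE for `φ₁`), together with the boundary condition
`g(ξ) → 0` as `ξ → 0⁺`. -/
theorem stmt2 (n : ℕ) (hn : 2 ≤ n) :
    (∀ ξ : ℝ, 0 < ξ →
      deriv (fun x : ℝ =>
          ((x ^ (2 * n))⁻¹ + 2 + x ^ (2 * n)) / x
            * ∫ s in (0:ℝ)..x, s ^ (2 * n + 1) / (1 + s ^ (2 * n)) ^ 2) ξ
        + ((2 * (n : ℝ) + 1) - (2 * (n : ℝ) - 1) * ξ ^ (2 * n)) / (ξ * (1 + ξ ^ (2 * n)))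
            * (((ξ ^ (2 * n))⁻¹ + 2 + ξ ^ (2 * n)) / ξ
                * ∫ s in (0:ℝ)..ξ, s ^ (2 * n + 1) / (1 + s ^ (2 * n)) ^ 2) = 1)
    ∧ Filter.Tendsto (fun ξ : ℝ =>
          ((ξ ^ (2 * n))⁻¹ + 2 + ξ ^ (2 * n)) / ξ
            * ∫ s in (0:ℝ)..ξ, s ^ (2 * n + 1) / (1 + s ^ (2 * n)) ^ 2)
        (nhdsWithin 0 (Set.Ioi 0)) (nhds 0) := by
  obtain ⟨k, hk⟩ : ∃ k, 2 * n = k + 1 := ⟨2 * n - 1, by omega⟩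
  have hcast : (2 : ℝ) * n = (k : ℝ) + 1 := by exact_mod_cast congrArg (Nat.cast : ℕ → ℝ) hk
  have hpow : ∀ s : ℝ, 0 ≤ s ^ (k + 1) := by
    intro s; rw [← hk, mul_comm, pow_mul]; positivity
  have hden : ∀ s : ℝ, (0:ℝ) < 1 + s ^ (k+1) := fun s => by nlinarith [hpow s]
  have hcont : Continuous (fun s : ℝ => s ^ (k + 2) / (1 + s ^ (k+1)) ^ 2) := by
    apply Continuous.div (by continuity) (by continuity)
    intro s; have := hden s; positivity
  simp only [hk, hcast]
  constructor
  · intro ξ hξ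
    have hξ0 : ξ ≠ 0 := hξ.ne'
    have hξp : (ξ : ℝ) ^ (k+1) ≠ 0 := pow_ne_zero _ hξ0
    have hdξ : (0:ℝ) < 1 + ξ ^ (k+1) := hden ξ
    -- derivative of the integral
    have hI : HasDerivAt (fun x : ℝ => ∫ s in (0:ℝ)..x, s ^ (k + 2) / (1 + s ^ (k+1)) ^ 2)
        (ξ ^ (k + 2) / (1 + ξ ^ (k+1)) ^ 2) ξ :=
      intervalIntegral.integral_hasDerivAt_right (hcont.intervalIntegrable _ _)
        (hcont.stronglyMeasurableAtFilter _ _) hcont.continuousAt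
    -- derivative of the prefactor
    have hp : HasDerivAt (fun x : ℝ => x ^ (k+1)) ((k+1) * ξ ^ k) ξ := by
      simpa using hasDerivAt_pow (k+1) ξ
    have hu : HasDerivAt (fun x : ℝ => (x ^ (k+1))⁻¹ + 2 + x ^ (k+1))
        ((-((k+1) * ξ ^ k) / (ξ ^ (k+1)) ^ 2 + 0) + (k+1) * ξ ^ k) ξ :=
      ((hp.inv hξp).add (hasDerivAt_const ξ 2)).add hp
    have hA : HasDerivAt (fun x : ℝ => ((x ^ (k+1))⁻¹ + 2 + x ^ (k+1)) / x)
        ((((-((k+1) * ξ ^ k) / (ξ ^ (k+1)) ^ 2 + 0) + (k+1) * ξ ^ k) * ξ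
          - ((ξ ^ (k+1))⁻¹ + 2 + ξ ^ (k+1)) * 1) / ξ ^ 2) ξ :=
      hu.div (hasDerivAt_id ξ) hξ0
    have hg := hA.mul hI
    erw [hg.deriv]
    set J := ∫ s in (0:ℝ)..ξ, s ^ (k + 2) / (1 + s ^ (k+1)) ^ 2 with hJ
    field_simp
    ring
  · -- boundary limit
    apply squeeze_zero' (g := fun ξ : ℝ => 3 * ξ)
    · filter_upwards [self_mem_nhdsWithin] with ξ (hξ : 0 < ξ)
      have hI0 : 0 ≤ ∫ s in (0:ℝ)..ξ, s ^ (k + 2) / (1 + s ^ (k+1)) ^ 2 := by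
        apply intervalIntegral.integral_nonneg hξ.le
        intro s hs
        exact div_nonneg (pow_nonneg hs.1 _) (sq_nonneg _)
      have hA0 : 0 ≤ ((ξ ^ (k+1))⁻¹ + 2 + ξ ^ (k+1)) / ξ := by
        apply div_nonneg _ hξ.le
        have := hpow ξ; positivity
      exact mul_nonneg hA0 hI0
    · filter_upwards [Ioo_mem_nhdsGT_of_mem (Set.left_mem_Ico.2 one_pos)] with ξ hξ
      obtain ⟨hξ0, hξ1⟩ := hξ
      have hIle : (∫ s in (0:ℝ)..ξ, s ^ (k + 2) / (1 + s ^ (k+1)) ^ 2)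
          ≤ ξ ^ (k+3) / (k+3) := by
        have h1 : (∫ s in (0:ℝ)..ξ, s ^ (k + 2) / (1 + s ^ (k+1)) ^ 2)
            ≤ ∫ s in (0:ℝ)..ξ, s ^ (k+2) := by
          apply intervalIntegral.integral_mono_on hξ0.le (hcont.intervalIntegrable _ _)
            ((continuous_pow _).intervalIntegrable _ _)
          intro s hs
          have h2 : (1:ℝ) ≤ (1 + s ^ (k+1)) ^ 2 := by nlinarith [hpow s]
          exact div_le_self (pow_nonneg hs.1 _) h2
        have h3 : (∫ s in (0:ℝ)..ξ, s ^ (k+2)) = ξ ^ (k+3) / (k+3) := by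
          rw [integral_pow]; push_cast; ring_nf
        linarith [h1, h3.le, h3.ge]
      have hA0 : 0 ≤ ((ξ ^ (k+1))⁻¹ + 2 + ξ ^ (k+1)) / ξ := by
        apply div_nonneg _ hξ0.le
        have := hpow ξ; positivity
      have step1 : ((ξ ^ (k+1))⁻¹ + 2 + ξ ^ (k+1)) / ξ
            * ∫ s in (0:ℝ)..ξ, s ^ (k + 2) / (1 + s ^ (k+1)) ^ 2
          ≤ ((ξ ^ (k+1))⁻¹ + 2 + ξ ^ (k+1)) / ξ * (ξ ^ (k+3) / (k+3)) :=
        mul_le_mul_of_nonneg_left hIle hA0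
      have heq : ((ξ ^ (k+1))⁻¹ + 2 + ξ ^ (k+1)) / ξ * (ξ ^ (k+3) / (k+3))
          = (ξ + 2 * ξ ^ (k+2) + ξ ^ (2*k+3)) / (k+3) := by
        have hξp : (ξ : ℝ) ^ (k+1) ≠ 0 := pow_ne_zero _ hξ0.ne'
        field_simp
        ring
      have hb : ∀ m : ℕ, 2 ≤ m → ξ ^ m ≤ ξ := by
        intro m hm
        calc ξ ^ m ≤ ξ ^ 1 := pow_le_pow_of_le_one hξ0.le hξ1.le (by omega)
        _ = ξ := pow_one ξ
      have hsum : (ξ + 2 * ξ ^ (k+2) + ξ ^ (2*k+3)) / (k+3) ≤ 3 * ξ := by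
        have h2 := hb (k+2) (by omega)
        have h3 := hb (2*k+3) (by omega)
        have hk0 : (0:ℝ) ≤ (k:ℝ) := Nat.cast_nonneg k
        rw [div_le_iff₀ (by linarith)]
        nlinarith [hξ0.le]
      linarith [step1, heq.le, heq.ge, hsum]
    · have : Continuous (fun ξ : ℝ => 3 * ξ) := by continuity
      have h := (this.tendsto 0).mono_left (nhdsWithin_le_nhds (s := Set.Ioi (0:ℝ)))
      simpa using h
end

section
/- Let g(ξ) = (ξ^{-2n}+2+ξ^{2n})/ξ · ∫₀^ξ s^{2n+1}/(1+s^{2n})² ds with n ≥ 2 and E_n = ∫₀^∞ s^{2n+1}/(1+s^{2n})² ds. Then g(ξ) − E_n ξ^{2n−1} + ξ/(2n−2) → 0 as ξ → ∞. -/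
open MeasureTheory Set Real Filter

-- pointwise key inequality
lemma stmt3_key (s u : ℝ) (hs : 0 < s) (hu : 0 < u) :
    |s * u / (1+u)^2 - s/u| ≤ 2 * (s / u^2) := by
  have h : s/u - s*u/(1+u)^2 = s*(1+2*u)/(u*(1+u)^2) := by
    field_simp
    ring
  have h2 : 2*(s/u^2) = (2*s)/u^2 := by ring
  rw [abs_sub_comm, h, abs_of_nonneg (by positivity), h2,
    div_le_div_iff₀ (by positivity) (by positivity)]
  nlinarith [mul_pos hs hu, sq_nonneg u, mul_pos (mul_pos hs hu) hu]

lemma stmt3_bound (s u : ℝ) (hs : 0 < s) (hu : 0 < u) :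
    s * u / (1+u)^2 ≤ s / u := by
  rw [div_le_div_iff₀ (by positivity) hu]
  nlinarith [mul_pos hs hu]

lemma stmt3_rpow_eq (s : ℝ) (hs : 0 < s) (k : ℕ) :
    s ^ ((1:ℝ) - k) = s / s ^ k := by
  rw [sub_eq_add_neg, rpow_add hs, rpow_one, rpow_neg hs.le, rpow_natCast, div_eq_mul_inv]


/-- Let `g(ξ) = (ξ^{-2n}+2+ξ^{2n})/ξ · ∫₀^ξ s^{2n+1}/(1+s^{2n})² ds` with `n ≥ 2` and
`E_n = ∫₀^∞ s^{2n+1}/(1+s^{2n})² ds`. Then `g(ξ) − E_n ξ^{2n−1} + ξ/(2n−2) → 0` as `ξ → ∞`. -/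
theorem stmt3 (n : ℕ) (hn : 2 ≤ n) :
    Filter.Tendsto (fun ξ : ℝ =>
        ((ξ ^ (2 * n))⁻¹ + 2 + ξ ^ (2 * n)) / ξ
            * (∫ s in (0:ℝ)..ξ, s ^ (2 * n + 1) / (1 + s ^ (2 * n)) ^ 2)
          - (∫ s in Set.Ioi (0:ℝ), s ^ (2 * n + 1) / (1 + s ^ (2 * n)) ^ 2) * ξ ^ (2 * n - 1)
          + ξ / (2 * (n : ℝ) - 2))
      Filter.atTop (nhds 0) := by
  set f : ℝ → ℝ := fun s => s ^ (2 * n + 1) / (1 + s ^ (2 * n)) ^ 2 with hf_def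
  have hden : ∀ s : ℝ, 0 < 1 + s ^ (2 * n) := by
    intro s
    have := (even_two_mul n).pow_nonneg (a := s)
    linarith
  have hcont : Continuous f := by
    apply Continuous.div (by continuity) (by continuity)
    intro s
    exact pow_ne_zero _ (ne_of_gt (hden s))
  have hnR : (4:ℝ) ≤ 2 * (n:ℝ) := by
    have : (2:ℝ) ≤ (n:ℝ) := by exact_mod_cast hn
    linarith
  -- f equals s * u / (1+u)^2 with u = s^(2n)
  have hf_eq : ∀ s : ℝ, f s = s * s ^ (2*n) / (1 + s ^ (2*n)) ^ 2 := by
    intro s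
    simp only [hf_def, pow_succ]
    ring_nf
  -- integrability on Ioi 1 via comparison
  have ha : ((1:ℝ) - (2*n:ℕ)) < -1 := by push_cast; linarith
  have hb : ((1:ℝ) - (4*n:ℕ)) < -1 := by push_cast; linarith
  have hI1 : IntegrableOn f (Ioi (1:ℝ)) := by
    apply Integrable.mono (integrableOn_Ioi_rpow_of_lt ha one_pos)
      (hcont.aestronglyMeasurable.restrict)
    filter_upwards [ae_restrict_mem measurableSet_Ioi] with s hs
    have hs0 : (0:ℝ) < s := lt_trans one_pos hs
    have hu : (0:ℝ) < s ^ (2*n) := pow_pos hs0 _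
    rw [Real.norm_eq_abs, Real.norm_eq_abs, hf_eq,
      abs_of_nonneg (by positivity), abs_of_nonneg (rpow_nonneg hs0.le _),
      stmt3_rpow_eq s hs0 (2*n)]
    exact stmt3_bound s _ hs0 hu
  have hint : IntegrableOn f (Ioi (0:ℝ)) := by
    rw [← Ioc_union_Ioi_eq_Ioi (zero_le_one)]
    exact (hcont.integrableOn_Ioc).union hI1
  -- F tends to E
  have hFE : Tendsto (fun ξ : ℝ => ∫ s in (0:ℝ)..ξ, f s) atTop
      (nhds (∫ s in Set.Ioi (0:ℝ), f s)) :=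
    intervalIntegral_tendsto_integral_Ioi 0 hint tendsto_id
  set E := ∫ s in Set.Ioi (0:ℝ), f s with hE_def
  have hc1 : (0:ℝ) < 2*(n:ℝ) - 2 := by linarith
  have hc2 : (0:ℝ) < 4*(n:ℝ) - 2 := by linarith
  have hcast : ((2*n-1:ℕ):ℝ) = 2*(n:ℝ) - 1 := by
    have h1 : 1 ≤ 2*n := by omega
    rw [Nat.cast_sub h1]
    push_cast
    ring
  -- tail estimate
  have tail : ∀ ξ : ℝ, 1 ≤ ξ →
      |(∫ s in Ioi ξ, f s) - ξ ^ ((2:ℝ) - 2*n) / (2*(n:ℝ) - 2)| ≤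
        2 * ξ ^ ((2:ℝ) - 4*n) / (4*(n:ℝ) - 2) := by
    intro ξ hξ
    have hξ0 : (0:ℝ) < ξ := lt_of_lt_of_le one_pos hξ
    have hfi : IntegrableOn f (Ioi ξ) := hint.mono_set (Ioi_subset_Ioi hξ0.le)
    have hgi : IntegrableOn (fun s : ℝ => s ^ ((1:ℝ) - (2*n:ℕ))) (Ioi ξ) :=
      integrableOn_Ioi_rpow_of_lt ha hξ0
    have hbi : IntegrableOn (fun s : ℝ => 2 * s ^ ((1:ℝ) - (4*n:ℕ))) (Ioi ξ) :=
      (integrableOn_Ioi_rpow_of_lt hb hξ0).const_mul 2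
    have hgval : (∫ s in Ioi ξ, s ^ ((1:ℝ) - (2*n:ℕ))) = ξ ^ ((2:ℝ) - 2*n) / (2*(n:ℝ) - 2) := by
      rw [integral_Ioi_rpow_of_lt ha hξ0]
      have he : (1:ℝ) - (2*n:ℕ) + 1 = (2:ℝ) - 2*n := by push_cast; ring
      rw [he, div_eq_div_iff (ne_of_lt (by linarith : (2:ℝ)-2*n < 0)) hc1.ne']
      ring
    have hdiff : (∫ s in Ioi ξ, f s) - ξ ^ ((2:ℝ) - 2*n) / (2*(n:ℝ) - 2)
        = ∫ s in Ioi ξ, (f s - s ^ ((1:ℝ) - (2*n:ℕ))) := by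
      rw [integral_sub hfi hgi, hgval]
    rw [hdiff, ← Real.norm_eq_abs]
    have hbound : ∀ᵐ s ∂(volume.restrict (Ioi ξ)),
        ‖f s - s ^ ((1:ℝ) - (2*n:ℕ))‖ ≤ 2 * s ^ ((1:ℝ) - (4*n:ℕ)) := by
      filter_upwards [ae_restrict_mem measurableSet_Ioi] with s hs
      have hs0 : (0:ℝ) < s := lt_trans hξ0 hs
      have hu : (0:ℝ) < s ^ (2*n) := pow_pos hs0 _
      have h4 : s ^ (4*n) = (s ^ (2*n))^2 := by
        rw [show 4*n = 2*n*2 by ring, pow_mul]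
      rw [Real.norm_eq_abs, hf_eq, stmt3_rpow_eq s hs0 (2*n), stmt3_rpow_eq s hs0 (4*n), h4]
      exact stmt3_key s _ hs0 hu
    refine le_trans (norm_integral_le_of_norm_le hbi hbound) ?_
    rw [MeasureTheory.integral_const_mul, integral_Ioi_rpow_of_lt hb hξ0]
    have he : (1:ℝ) - (4*n:ℕ) + 1 = (2:ℝ) - 4*n := by push_cast; ring
    rw [he]
    apply le_of_eq
    have hne1 : ((2:ℝ) - 4*(n:ℝ)) ≠ 0 := ne_of_lt (by linarith)
    field_simp
    ring
  -- splitting the integral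
  have hsplit : ∀ ξ : ℝ, 1 ≤ ξ →
      (∫ s in (0:ℝ)..ξ, f s) = E - ∫ s in Ioi ξ, f s := by
    intro ξ hξ
    have hξ0 : (0:ℝ) < ξ := lt_of_lt_of_le one_pos hξ
    rw [intervalIntegral.integral_of_le hξ0.le]
    have hEq : E = (∫ s in Ioc (0:ℝ) ξ, f s) + ∫ s in Ioi ξ, f s := by
      rw [hE_def, ← Ioc_union_Ioi_eq_Ioi hξ0.le,
        setIntegral_union (Ioc_disjoint_Ioi le_rfl) measurableSet_Ioi
          (hint.mono_set Ioc_subset_Ioi_self) (hint.mono_set (Ioi_subset_Ioi hξ0.le))]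
    rw [hEq]; ring
  -- term A
  have hA : Tendsto (fun ξ : ℝ => ((ξ ^ (2*n))⁻¹ + 2)/ξ * (∫ s in (0:ℝ)..ξ, f s))
      atTop (nhds 0) := by
    have htop : Tendsto (fun ξ : ℝ => ξ ^ (2*n)) atTop atTop :=
      tendsto_pow_atTop (by omega)
    have h2 : Tendsto (fun ξ : ℝ => (ξ ^ (2*n))⁻¹ + 2) atTop (nhds (0 + 2)) :=
      (tendsto_inv_atTop_zero.comp htop).add tendsto_const_nhds
    have h1 : Tendsto (fun ξ : ℝ => ((ξ ^ (2*n))⁻¹ + 2)/ξ) atTop (nhds ((0+2)*0)) := by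
      simpa [div_eq_mul_inv] using h2.mul tendsto_inv_atTop_zero
    have := h1.mul hFE
    norm_num at this
    simpa using this
  -- term B
  have hB : Tendsto (fun ξ : ℝ =>
      -(ξ ^ (2*n-1)) * ((∫ s in Ioi ξ, f s) - ξ ^ ((2:ℝ)-2*n)/(2*(n:ℝ)-2)))
      atTop (nhds 0) := by
    apply squeeze_zero_norm' (a := fun ξ : ℝ => 2/(4*(n:ℝ)-2) * ξ ^ (-(2*(n:ℝ)-1)))
    · filter_upwards [eventually_ge_atTop (1:ℝ)] with ξ hξ
      have hξ0 : (0:ℝ) < ξ := lt_of_lt_of_le one_pos hξ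
      rw [norm_mul, norm_neg, norm_pow, Real.norm_eq_abs, abs_of_pos hξ0, Real.norm_eq_abs]
      have step1 : ξ ^ (2*n-1) * |(∫ s in Ioi ξ, f s) - ξ ^ ((2:ℝ)-2*n)/(2*(n:ℝ)-2)|
          ≤ ξ ^ (2*n-1) * (2 * ξ ^ ((2:ℝ)-4*n) / (4*(n:ℝ)-2)) :=
        mul_le_mul_of_nonneg_left (tail ξ hξ) (pow_nonneg hξ0.le _)
      refine le_trans step1 (le_of_eq ?_)
      have hcomb : (ξ : ℝ) ^ ((2:ℝ)*(n:ℝ)-1) * ξ ^ ((2:ℝ)-4*n) = ξ ^ (-(2*(n:ℝ)-1)) := by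
        rw [← rpow_add hξ0]
        norm_num
        ring_nf
      rw [← rpow_natCast ξ (2*n-1), hcast]
      calc ξ ^ (2*(n:ℝ)-1) * (2 * ξ ^ ((2:ℝ)-4*n) / (4*(n:ℝ)-2))
          = 2/(4*(n:ℝ)-2) * (ξ ^ ((2:ℝ)*(n:ℝ)-1) * ξ ^ ((2:ℝ)-4*n)) := by ring
        _ = 2/(4*(n:ℝ)-2) * ξ ^ (-(2*(n:ℝ)-1)) := by rw [hcomb]
    · simpa using (tendsto_rpow_neg_atTop
        (by linarith : (0:ℝ) < 2*(n:ℝ)-1)).const_mul (2/(4*(n:ℝ)-2))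
  -- combine
  have hAB := hA.add hB
  rw [add_zero] at hAB
  refine Tendsto.congr' ?_ hAB
  filter_upwards [eventually_ge_atTop (1:ℝ)] with ξ hξ
  have hξ0 : (0:ℝ) < ξ := lt_of_lt_of_le one_pos hξ
  rw [hsplit ξ hξ]
  have hxpow : ξ ^ (2*n) = ξ ^ (2*n-1) * ξ := by
    rw [← pow_succ]
    congr 1
    omega
  have hxc : ξ ^ (2*n-1) * ξ ^ ((2:ℝ)-2*n) = ξ := by
    rw [← rpow_natCast ξ (2*n-1), hcast, ← rpow_add hξ0]
    norm_num
  rw [hxpow]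
  set T := ∫ s in Ioi ξ, f s with hT
  have e1 : ((ξ^(2*n-1)*ξ)⁻¹ + 2 + ξ^(2*n-1)*ξ)/ξ * (E - T)
      = ((ξ^(2*n-1)*ξ)⁻¹ + 2)/ξ * (E - T) + ξ^(2*n-1) * (E - T) := by
    field_simp
  rw [e1]
  linear_combination hxc / (2*(n:ℝ)-2)
end

section
/- The function θ₁(ξ) = −ξ ln ξ satisfies ξ²θ₁'' + ξθ₁' − cos(2θ₀(ξ))·θ₁ = −ξ³·θ₀'(ξ) + h(ξ) where θ₀(ξ) = 2 arctan ξ and h(ξ)/ξ → 0 as ξ → ∞; more precisely, the general solution of θ₁'' + θ₁'/ξ − cos(2θ₀)/ξ² · θ₁ = −ξ θ₀' satisfies θ₁(ξ) ∼ −ξ ln ξ + c ξ as ξ → ∞ for some constant c. -/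
open Real MeasureTheory intervalIntegral

noncomputable def Jf (x : ℝ) : ℝ := 2*x^3*Real.log x/(1+x^2)^2
noncomputable def Jint (x : ℝ) : ℝ := ∫ t in (1:ℝ)..x, Jf t
noncomputable def Af (x : ℝ) : ℝ := -(x^2)/4 + Real.log (1+x^2)/2 - Jint x
noncomputable def Qf (x : ℝ) : ℝ := 2 - 2*Real.log (1+x^2) - 2/(1+x^2)
noncomputable def v1 (x : ℝ) : ℝ := 2*x/(1+x^2)
noncomputable def v2 (x : ℝ) : ℝ := (x^2-1)/(4*x) + x*Real.log x/(1+x^2)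
noncomputable def v1d (x : ℝ) : ℝ := (2-2*x^2)/(1+x^2)^2
noncomputable def v2d (x : ℝ) : ℝ :=
  1/4 + 1/(4*x^2) + Real.log x*(1-x^2)/(1+x^2)^2 + 1/(1+x^2)
noncomputable def Ad (x : ℝ) : ℝ := -(x/2) + x/(1+x^2) - Jf x
noncomputable def Qd (x : ℝ) : ℝ := -4*x^3/(1+x^2)^2
noncomputable def th1 (x : ℝ) : ℝ := -(v1 x) * Af x + Qf x * v2 x
noncomputable def th1d (x : ℝ) : ℝ := -(v1d x) * Af x + Qf x * v2d x
noncomputable def v1dd (x : ℝ) : ℝ := (4*x^3-12*x)/(1+x^2)^3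
noncomputable def v2dd (x : ℝ) : ℝ :=
  -(1/(2*x^3)) + (1-x^2)/(x*(1+x^2)^2) + Real.log x*(2*x^3-6*x)/(1+x^2)^3 - 2*x/(1+x^2)^2
noncomputable def th1dd (x : ℝ) : ℝ :=
  -(v1dd x) * Af x - v1d x * Ad x + Qd x * v2d x + Qf x * v2dd x

lemma hs_pos (x : ℝ) : (0:ℝ) < 1 + x^2 := by positivity
lemma hs_ne (x : ℝ) : (1:ℝ) + x^2 ≠ 0 := (hs_pos x).ne'

lemma Jf_contOn : ContinuousOn Jf (Set.Ioi (0:ℝ)) := by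
  intro x hx
  refine ContinuousAt.continuousWithinAt ?_
  have hx0 : x ≠ 0 := ne_of_gt hx
  unfold Jf
  exact ((continuousAt_const.mul (continuousAt_id.pow 3)).mul
    (Real.continuousAt_log hx0)).div (by fun_prop) (pow_ne_zero _ (hs_ne x))

lemma uIcc_sub {a b : ℝ} (ha : 0 < a) (hb : 0 < b) : Set.uIcc a b ⊆ Set.Ioi 0 :=
  fun y hy => lt_of_lt_of_le (lt_min ha hb) hy.1

lemma Jf_intble {a b : ℝ} (ha : 0 < a) (hb : 0 < b) : IntervalIntegrable Jf volume a b :=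
  (Jf_contOn.mono (uIcc_sub ha hb)).intervalIntegrable

lemma hJ {x : ℝ} (hx : 0 < x) : HasDerivAt Jint (Jf x) x := by
  apply intervalIntegral.integral_hasDerivAt_right (Jf_intble one_pos hx)
  · exact (ContinuousOn.stronglyMeasurableAtFilter isOpen_Ioi Jf_contOn) x hx
  · exact (Jf_contOn x hx).continuousAt (Ioi_mem_nhds hx)

lemma hA {x : ℝ} (hx : 0 < x) : HasDerivAt Af (Ad x) x := by
  have h1 : HasDerivAt (fun y : ℝ => -(y^2)/4) (-(x/2)) x := by
    have := (hasDerivAt_pow 2 x).neg.div_const 4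
    convert this using 1 <;> (try rfl); push_cast; ring
  have h2 : HasDerivAt (fun y : ℝ => Real.log (1+y^2)/2) (x/(1+x^2)) x := by
    have hin : HasDerivAt (fun y : ℝ => 1+y^2) (2*x) x := by
      simpa using (hasDerivAt_pow 2 x).const_add 1
    have := ((hin.log (hs_ne x)).div_const 2)
    convert this using 1 <;> (try rfl); field_simp
  exact (h1.add h2).sub (hJ hx)

lemma hSder (x : ℝ) : HasDerivAt (fun y : ℝ => 1+y^2) (2*x) x := by
  simpa using (hasDerivAt_pow 2 x).const_add 1

lemma hv1 {x : ℝ} (hx : 0 < x) : HasDerivAt v1 (v1d x) x := by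
  have := ((hasDerivAt_id x).const_mul 2).div (hSder x) (hs_ne x)
  convert this using 1 <;> (try rfl)
  simp only [v1d, id]; field_simp; ring

lemma hQ {x : ℝ} (hx : 0 < x) : HasDerivAt Qf (Qd x) x := by
  have h2 : HasDerivAt (fun y : ℝ => 2*Real.log (1+y^2)) (2*(2*x/(1+x^2))) x :=
    ((hSder x).log (hs_ne x)).const_mul 2
  have h3 : HasDerivAt (fun y : ℝ => 2/(1+y^2)) (-(2*(2*x))/(1+x^2)^2) x :=
    (hasDerivAt_const x 2).div (hSder x) (hs_ne x) |>.congr_deriv (by field_simp; ring)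
  have := ((hasDerivAt_const x (2:ℝ)).sub h2).sub h3
  convert this using 1 <;> (try rfl)
  simp only [Qd]; field_simp; ring

lemma hv2 {x : ℝ} (hx : 0 < x) : HasDerivAt v2 (v2d x) x := by
  have hx0 : x ≠ 0 := ne_of_gt hx
  have h1 : HasDerivAt (fun y : ℝ => (y^2-1)/(4*y))
      ((2*x*(4*x) - (x^2-1)*4)/(4*x)^2) x :=
    ((hasDerivAt_pow 2 x).sub_const 1 |>.congr_deriv (by push_cast; ring)).div
      (by simpa using (hasDerivAt_id x).const_mul 4) (by positivity)
  have h2 : HasDerivAt (fun y : ℝ => y*Real.log y)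
      (Real.log x + 1) x := by
    have := (hasDerivAt_id x).mul (Real.hasDerivAt_log hx0)
    convert this using 1 <;> (try rfl); field_simp; simp only [id]; ring
  have h3 : HasDerivAt (fun y : ℝ => y*Real.log y/(1+y^2))
      (((Real.log x + 1)*(1+x^2) - x*Real.log x*(2*x))/(1+x^2)^2) x :=
    h2.div (hSder x) (hs_ne x)
  have := h1.add h3
  convert this using 1 <;> (try rfl)
  simp only [v2d]; field_simp; ring

lemma hv1d {x : ℝ} (hx : 0 < x) : HasDerivAt v1d (v1dd x) x := by
  have hnum : HasDerivAt (fun y : ℝ => 2-2*y^2) (-(4*x)) x := by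
    have := ((hasDerivAt_pow 2 x).const_mul 2).const_sub 2
    convert this using 1 <;> (try rfl); push_cast; ring
  have hden : HasDerivAt (fun y : ℝ => (1+y^2)^2) (2*(1+x^2)*(2*x)) x := by
    have := (hSder x).pow 2
    convert this using 1 <;> (try rfl); push_cast; ring
  have := hnum.div hden (pow_ne_zero _ (hs_ne x))
  convert this using 1 <;> (try rfl)
  simp only [v1dd]; field_simp; ring

lemma hv2d {x : ℝ} (hx : 0 < x) : HasDerivAt v2d (v2dd x) x := by
  have hx0 : x ≠ 0 := ne_of_gt hx
  have hden : HasDerivAt (fun y : ℝ => (1+y^2)^2) (2*(1+x^2)*(2*x)) x := by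
    have := (hSder x).pow 2
    convert this using 1 <;> (try rfl); push_cast; ring
  have h1 : HasDerivAt (fun y : ℝ => 1/(4*y^2)) (-(8*x)/(4*x^2)^2) x := by
    have hd : HasDerivAt (fun y : ℝ => 4*y^2) (8*x) x := by
      have := (hasDerivAt_pow 2 x).const_mul 4
      convert this using 1 <;> (try rfl); push_cast; ring
    have := (hasDerivAt_const x (1:ℝ)).div hd (by positivity)
    convert this using 1 <;> (try rfl); field_simp; ring
  have h2 : HasDerivAt (fun y : ℝ => Real.log y*(1-y^2))
      ((1/x)*(1-x^2) + Real.log x*(-(2*x))) x := by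
    have hb : HasDerivAt (fun y : ℝ => 1-y^2) (-(2*x)) x := by
      have := (hasDerivAt_pow 2 x).const_sub 1
      convert this using 1 <;> (try rfl); push_cast; ring
    have := (Real.hasDerivAt_log hx0).mul hb
    convert this using 1 <;> (try rfl); ring
  have h3 : HasDerivAt (fun y : ℝ => Real.log y*(1-y^2)/(1+y^2)^2)
      ((((1/x)*(1-x^2) + Real.log x*(-(2*x)))*(1+x^2)^2
        - Real.log x*(1-x^2)*(2*(1+x^2)*(2*x)))/((1+x^2)^2)^2) x :=
    h2.div hden (pow_ne_zero _ (hs_ne x))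
  have h4 : HasDerivAt (fun y : ℝ => 1/(1+y^2)) (-(2*x)/(1+x^2)^2) x := by
    have := (hasDerivAt_const x (1:ℝ)).div (hSder x) (hs_ne x)
    convert this using 1 <;> (try rfl); field_simp; ring
  have := (((hasDerivAt_const x (1/4:ℝ)).add h1).add h3).add h4
  convert this using 1 <;> (try rfl)
  simp only [v2dd]; field_simp; ring

lemma hth1 {x : ℝ} (hx : 0 < x) : HasDerivAt th1 (th1d x) x := by
  have hx0 : x ≠ 0 := ne_of_gt hx
  have := (((hv1 hx).mul (hA hx)).neg).add ((hQ hx).mul (hv2 hx))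
  convert this using 1 <;> (try rfl)
  · ext y; simp only [th1, v1, Af, Qf, v2, Pi.add_apply, Pi.neg_apply, Pi.mul_apply]; ring
  · simp only [th1d, v1, v1d, Ad, Jf, Qd, Qf, v2, v2d]
    field_simp
    ring

lemma hth1d {x : ℝ} (hx : 0 < x) : HasDerivAt th1d (th1dd x) x := by
  have := (((hv1d hx).mul (hA hx)).neg).add ((hQ hx).mul (hv2d hx))
  convert this using 1 <;> (try rfl)
  · ext y; simp only [th1d, v1d, Af, Qf, v2d, Pi.add_apply, Pi.neg_apply, Pi.mul_apply]; ring
  · simp only [th1dd]; ring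

lemma cos4arctan (x : ℝ) :
    Real.cos (2*(2*Real.arctan x)) = 2*((1-x^2)/(1+x^2))^2 - 1 := by
  have h2 : Real.cos (2*Real.arctan x) = (1-x^2)/(1+x^2) := by
    rw [Real.cos_two_mul, Real.cos_arctan]
    have h1 : Real.sqrt (1+x^2) ^ 2 = 1 + x^2 := Real.sq_sqrt (hs_pos x).le
    have h0 : Real.sqrt (1+x^2) ≠ 0 := by positivity
    field_simp
    nlinarith [h1]
  rw [Real.cos_two_mul, h2]

lemma ode_holds {x : ℝ} (hx : 0 < x) :
    th1dd x + th1d x / x - Real.cos (2*(2*Real.arctan x)) / x^2 * th1 x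
      = -x * (2/(1+x^2)) := by
  have hx0 : x ≠ 0 := ne_of_gt hx
  rw [cos4arctan]
  simp only [th1dd, th1d, th1, v1, v1d, v1dd, v2, v2d, v2dd, Qf, Qd, Ad, Jf]
  field_simp
  ring

lemma log_sq_le {x : ℝ} (hx : 1 ≤ x) : (Real.log x)^2 ≤ 4*x := by
  have hx0 : (0:ℝ) < x := by linarith
  have h1 : Real.log x = 2 * Real.log (Real.sqrt x) := by
    rw [Real.log_sqrt hx0.le]; ring
  have h2 : Real.log (Real.sqrt x) ≤ Real.sqrt x := by
    have h3 : (0:ℝ) < Real.sqrt x := Real.sqrt_pos.mpr hx0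
    have := Real.log_le_sub_one_of_pos h3
    linarith
  have h4 : Real.log x ≤ 2 * Real.sqrt x := by rw [h1]; linarith
  have h5 : (0:ℝ) ≤ Real.log x := Real.log_nonneg hx
  have h6 : Real.sqrt x ^ 2 = x := Real.sq_sqrt hx0.le
  nlinarith [h4, h5, h6, Real.sqrt_nonneg x]

lemma eps_bounds {x : ℝ} (hx : 1 ≤ x) :
    0 ≤ Real.log (1+x^2) - 2*Real.log x ∧ x^2*(Real.log (1+x^2) - 2*Real.log x) ≤ 1 := by
  have hx0 : (0:ℝ) < x := by linarith
  have hx2 : (0:ℝ) < x^2 := by positivity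
  have h2l : 2*Real.log x = Real.log (x^2) := by
    rw [Real.log_pow]; push_cast; ring
  constructor
  · rw [h2l]
    have := Real.log_le_log hx2 (by nlinarith : x^2 ≤ 1+x^2)
    linarith
  · have hdiv : Real.log (1+x^2) - 2*Real.log x = Real.log ((1+x^2)/x^2) := by
      rw [Real.log_div (hs_ne x) (ne_of_gt hx2), h2l]
    rw [hdiv]
    have hpos : (0:ℝ) < (1+x^2)/x^2 := by positivity
    have := Real.log_le_sub_one_of_pos hpos
    have h7 : (1+x^2)/x^2 - 1 = 1/x^2 := by field_simp; ring
    have h8 : Real.log ((1+x^2)/x^2) ≤ 1/x^2 := by rw [← h7]; exact this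
    calc x^2 * Real.log ((1+x^2)/x^2) ≤ x^2 * (1/x^2) :=
          mul_le_mul_of_nonneg_left h8 hx2.le
      _ = 1 := by field_simp

lemma Jint_bounds {x : ℝ} (hx : 1 ≤ x) :
    0 ≤ Jint x ∧ Jint x ≤ (Real.log x)^2 := by
  have hx0 : (0:ℝ) < x := by linarith
  constructor
  · apply intervalIntegral.integral_nonneg hx
    intro t ht
    have ht1 : (1:ℝ) ≤ t := ht.1
    have : (0:ℝ) ≤ Real.log t := Real.log_nonneg ht1
    unfold Jf
    positivity
  · have hcont : ContinuousOn (fun t : ℝ => 2*Real.log t/t) (Set.uIcc 1 x) := by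
      apply ContinuousOn.div
      · intro t ht
        have ht0 : t ≠ 0 := by
          have := uIcc_sub one_pos hx0 ht; exact ne_of_gt this
        exact (continuousAt_const.mul (Real.continuousAt_log ht0)).continuousWithinAt
      · exact continuousOn_id
      · intro t ht
        exact ne_of_gt (uIcc_sub one_pos hx0 ht)
    have hle : Jint x ≤ ∫ t in (1:ℝ)..x, 2*Real.log t/t := by
      apply intervalIntegral.integral_mono_on hx (Jf_intble one_pos hx0)
        hcont.intervalIntegrable
      intro t ht
      have ht1 : (1:ℝ) ≤ t := ht.1
      have ht0 : (0:ℝ) < t := by linarith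
      have hl : (0:ℝ) ≤ Real.log t := Real.log_nonneg ht1
      unfold Jf
      rw [div_le_div_iff₀ (by positivity) ht0]
      nlinarith [sq_nonneg t, sq_nonneg (t^2-1), mul_pos ht0 ht0]
    have heq : (∫ t in (1:ℝ)..x, 2*Real.log t/t) = (Real.log x)^2 := by
      have := intervalIntegral.integral_eq_sub_of_hasDerivAt
        (f := fun t : ℝ => (Real.log t)^2) (f' := fun t : ℝ => 2*Real.log t/t)
        (a := 1) (b := x) ?_ hcont.intervalIntegrable
      · rw [this]; simp [Real.log_one]
      · intro t ht
        have ht0 : t ≠ 0 := ne_of_gt (uIcc_sub one_pos hx0 ht)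
        have := ((Real.hasDerivAt_log ht0).pow 2)
        convert this using 1 <;> (try rfl)
        push_cast
        field_simp
    linarith [hle, heq.le]

set_option maxHeartbeats 1000000 in
lemma th1_bound {x : ℝ} (hx : 1 ≤ x) : |th1 x + x*Real.log x - x| ≤ 30 := by
  have hx0 : (0:ℝ) < x := by linarith
  have hsp := hs_pos x
  have hl0 : 0 ≤ Real.log x := Real.log_nonneg hx
  have hlx : Real.log x ≤ x := by
    have := Real.log_le_sub_one_of_pos hx0; linarith
  have hl2 := log_sq_le hx
  obtain ⟨he0, he1⟩ := eps_bounds hx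
  obtain ⟨hJ0, hJle⟩ := Jint_bounds hx
  set l := Real.log x with hldef
  set e := Real.log (1+x^2) - 2*Real.log x with hedef
  have hid : th1 x + x*l - x =
      (2*x/(1+x^2)) * Jint x
      - (3/2)*(x/(1+x^2))
      - (((1+x^2)^2-2)/(2*x*(1+x^2)))*e
      + ((1+x^4)/(x*(1+x^2)^2))*l
      - (4*x/(1+x^2))*l^2
      - (2*x/(1+x^2))*l*e := by
    simp only [th1, v1, Af, Qf, v2, hedef, hldef]
    field_simp
    ring
  -- term bounds
  have hv1le : 2*x/(1+x^2) ≤ 2/x := by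
    rw [div_le_div_iff₀ hsp hx0]; nlinarith
  have hB1a : 0 ≤ (2*x/(1+x^2)) * Jint x := by positivity
  have hB1b : (2*x/(1+x^2)) * Jint x ≤ 8 := by
    have h := mul_le_mul hv1le (hJle.trans hl2) hJ0 (by positivity : (0:ℝ) ≤ 2/x)
    have h2 : (2/x)*(4*x) = 8 := by field_simp; ring
    linarith [h, h2.le]
  have hB2a : 0 ≤ (3/2)*(x/(1+x^2)) := by positivity
  have hB2b : (3/2)*(x/(1+x^2)) ≤ 3/4 := by
    have : x/(1+x^2) ≤ 1/2 := by
      rw [div_le_div_iff₀ hsp two_pos]; nlinarith [sq_nonneg (x-1)]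
    linarith
  have hq0 : 0 ≤ ((1+x^2)^2-2)/(2*x*(1+x^2)) := by
    apply div_nonneg _ (by positivity)
    nlinarith
  have hqx : ((1+x^2)^2-2)/(2*x*(1+x^2)) ≤ x := by
    rw [div_le_iff₀ (by positivity)]; nlinarith [sq_nonneg (x^2-1)]
  have hxe : x*e ≤ 1 := by
    have hxx : x ≤ x^2 := by nlinarith
    have := mul_le_mul_of_nonneg_right hxx he0
    linarith
  have hB3a : 0 ≤ (((1+x^2)^2-2)/(2*x*(1+x^2)))*e := mul_nonneg hq0 he0
  have hB3b : (((1+x^2)^2-2)/(2*x*(1+x^2)))*e ≤ 1 :=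
    (mul_le_mul_of_nonneg_right hqx he0).trans hxe
  have hr : (1+x^4)/(x*(1+x^2)^2) ≤ 1/x := by
    rw [div_le_div_iff₀ (by positivity) hx0]; nlinarith [sq_nonneg (x^2-1)]
  have hB4a : 0 ≤ ((1+x^4)/(x*(1+x^2)^2))*l := by positivity
  have hB4b : ((1+x^4)/(x*(1+x^2)^2))*l ≤ 1 := by
    have h := mul_le_mul hr hlx hl0 (by positivity : (0:ℝ) ≤ 1/x)
    have h2 : (1/x)*x = 1 := by field_simp
    linarith [h, h2.le]
  have hB5a : 0 ≤ (4*x/(1+x^2))*l^2 := by positivity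
  have hB5b : (4*x/(1+x^2))*l^2 ≤ 16 := by
    have h4 : 4*x/(1+x^2) ≤ 4/x := by
      rw [div_le_div_iff₀ hsp hx0]; nlinarith
    have h := mul_le_mul h4 hl2 (sq_nonneg l) (by positivity : (0:ℝ) ≤ 4/x)
    have h2 : (4/x)*(4*x) = 16 := by field_simp; ring
    linarith [h, h2.le]
  have hB6a : 0 ≤ (2*x/(1+x^2))*l*e := by positivity
  have hB6b : (2*x/(1+x^2))*l*e ≤ 1 := by
    have h1 : 2*x/(1+x^2) ≤ 1 := by
      rw [div_le_one hsp]; nlinarith [sq_nonneg (x-1)]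
    have h2 : (2*x/(1+x^2))*l ≤ x := by
      calc (2*x/(1+x^2))*l ≤ 1*l := mul_le_mul_of_nonneg_right h1 hl0
        _ = l := one_mul l
        _ ≤ x := hlx
    calc (2*x/(1+x^2))*l*e ≤ x*e := mul_le_mul_of_nonneg_right h2 he0
      _ ≤ 1 := hxe
  rw [hid, abs_le]
  constructor <;> linarith

/-- There exists a solution `θ₁` on `(0,∞)` of the linearized inner equation
`θ₁'' + θ₁'/ξ − cos(2θ₀)/ξ² · θ₁ = −ξ θ₀'`, where `θ₀(ξ) = 2 arctan ξ`
(so `θ₀'(ξ) = 2/(1+ξ²)`), with `θ₁(ξ) + ξ ln ξ − ξ` bounded as `ξ → ∞`,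
i.e. `θ₁(ξ) ∼ −ξ ln ξ + ξ`. -/
theorem stmt4 :
    ∃ θ₁ : ℝ → ℝ,
      (∀ ξ : ℝ, 0 < ξ →
        deriv (deriv θ₁) ξ + deriv θ₁ ξ / ξ
          - Real.cos (2 * (2 * Real.arctan ξ)) / ξ ^ 2 * θ₁ ξ
          = -ξ * (2 / (1 + ξ ^ 2)))
      ∧ ∃ C : ℝ, ∀ ξ : ℝ, 1 ≤ ξ → |θ₁ ξ + ξ * Real.log ξ - ξ| ≤ C := by
  refine ⟨th1, fun ξ hξ => ?_, 30, fun ξ hξ => th1_bound hξ⟩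
  have hev : deriv th1 =ᶠ[nhds ξ] th1d :=
    Filter.eventuallyEq_of_mem (Ioi_mem_nhds hξ) (fun y hy => (hth1 hy).deriv)
  have h2 : deriv (deriv th1) ξ = th1dd ξ := by
    rw [Filter.EventuallyEq.deriv_eq hev]
    exact (hth1d hξ).deriv
  rw [h2, (hth1 hξ).deriv]
  exact ode_holds hξ
end

section
/- Every solution of the ODE τ(σ'' − σ') = σ on (1,∞) is a linear combination of a solution asymptotic to τe^τ and a solution f with τ·f(τ) → c for some constant c as τ → ∞; in particular, there exists a nonzero solution f with f(τ) = O(1/τ) as τ → ∞. -/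
open Set MeasureTheory Real Filter Topology

noncomputable def hh (s : ℝ) : ℝ := Real.exp (-s) / s ^ 2
noncomputable def gg (τ : ℝ) : ℝ := ∫ s in Set.Ioi τ, hh s
noncomputable def ff (τ : ℝ) : ℝ := τ * Real.exp τ * gg τ

lemma hh_contAt {s : ℝ} (hs : s ≠ 0) : ContinuousAt hh s := by
  apply ContinuousAt.div
  · exact (Real.continuous_exp.comp continuous_neg).continuousAt
  · exact (continuous_pow 2).continuousAt
  · exact pow_ne_zero 2 hs

lemma hh_meas : Measurable hh := by
  unfold hh; fun_prop

lemma hh_nonneg {s : ℝ} : 0 ≤ hh s := div_nonneg (Real.exp_pos _).le (sq_nonneg s)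

lemma expneg_int (a : ℝ) : IntegrableOn (fun s => Real.exp (-s)) (Ioi a) := by
  simpa using exp_neg_integrableOn_Ioi a one_pos

lemma hh_int {a : ℝ} (ha : 1 ≤ a) : IntegrableOn hh (Ioi a) := by
  apply Integrable.mono' (expneg_int a) (hh_meas.aestronglyMeasurable.restrict)
  filter_upwards [ae_restrict_mem measurableSet_Ioi] with s hs
  rw [Real.norm_eq_abs, abs_of_nonneg hh_nonneg]
  have h1 : (1:ℝ) ≤ s := le_of_lt (lt_of_le_of_lt ha hs)
  have : (1:ℝ) ≤ s ^ 2 := one_le_pow₀ h1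
  calc Real.exp (-s) / s ^ 2 ≤ Real.exp (-s) / 1 :=
        div_le_div_of_nonneg_left (Real.exp_pos _).le one_pos this
    _ = Real.exp (-s) := div_one _

lemma gg_split {τ : ℝ} (hτ : 1 ≤ τ) :
    gg 1 = (∫ s in (1:ℝ)..τ, hh s) + gg τ := by
  rw [intervalIntegral.integral_of_le hτ]
  unfold gg
  rw [← setIntegral_union (Ioc_disjoint_Ioi le_rfl) measurableSet_Ioi
    ((hh_int le_rfl).mono_set Ioc_subset_Ioi_self) (hh_int hτ)]
  rw [Ioc_union_Ioi_eq_Ioi hτ]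

lemma gg_hasDeriv {τ : ℝ} (hτ : 1 < τ) : HasDerivAt gg (-(hh τ)) τ := by
  have hτ0 : τ ≠ 0 := by linarith
  have hint : IntervalIntegrable hh volume 1 τ := by
    apply ContinuousOn.intervalIntegrable
    rw [Set.uIcc_of_le hτ.le]
    intro s hs
    have : s ≠ 0 := by have := hs.1; intro h; rw [h] at this; linarith
    exact (hh_contAt this).continuousWithinAt
  have hmeas : StronglyMeasurableAtFilter hh (𝓝 τ) volume :=
    hh_meas.stronglyMeasurable.stronglyMeasurableAtFilter
  have hd : HasDerivAt (fun t => ∫ s in (1:ℝ)..t, hh s) (hh τ) τ :=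
    intervalIntegral.integral_hasDerivAt_right hint hmeas (hh_contAt hτ0)
  have hd2 : HasDerivAt (fun t => gg 1 - ∫ s in (1:ℝ)..t, hh s) (-(hh τ)) τ :=
    hd.const_sub (gg 1)
  apply hd2.congr_of_eventuallyEq
  filter_upwards [Ioi_mem_nhds hτ] with t ht
  have := gg_split (le_of_lt ht)
  linarith

lemma gg_nonneg (τ : ℝ) : 0 ≤ gg τ :=
  setIntegral_nonneg measurableSet_Ioi fun _ _ => hh_nonneg

lemma gg_le {τ : ℝ} (hτ : 1 ≤ τ) : gg τ ≤ Real.exp (-τ) / τ ^ 2 := by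
  have hτ0 : (0:ℝ) < τ := by linarith
  have h1 : gg τ ≤ ∫ s in Ioi τ, Real.exp (-s) / τ ^ 2 := by
    apply setIntegral_mono_on (hh_int hτ) ((expneg_int τ).div_const _) measurableSet_Ioi
    intro s hs
    have hs' : τ ≤ s := le_of_lt hs
    exact div_le_div_of_nonneg_left (Real.exp_pos _).le (by positivity)
      (by nlinarith)
  calc gg τ ≤ ∫ s in Ioi τ, Real.exp (-s) / τ ^ 2 := h1
    _ = (∫ s in Ioi τ, Real.exp (-s)) / τ ^ 2 := integral_div _ _
    _ = Real.exp (-τ) / τ ^ 2 := by rw [integral_exp_neg_Ioi]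

lemma gg_pos : 0 < gg 2 := by
  rw [gg, setIntegral_pos_iff_support_of_nonneg_ae]
  · have : Function.support hh ∩ Ioi 2 = Ioi 2 := by
      apply inter_eq_right.mpr
      intro s hs
      have hs0 : (0:ℝ) < s := by have := hs; simp at this; linarith
      simp [Function.mem_support, hh]
      positivity
    rw [this, Real.volume_Ioi]
    simp
  · filter_upwards with s using hh_nonneg
  · exact hh_int (by norm_num)

noncomputable def f1 (τ : ℝ) : ℝ := (Real.exp τ + τ * Real.exp τ) * gg τ - 1/τ

lemma u_hasDeriv (τ : ℝ) : HasDerivAt (fun t => t * Real.exp t)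
    (Real.exp τ + τ * Real.exp τ) τ := by
  have := (hasDerivAt_id' τ).fun_mul (Real.hasDerivAt_exp τ)
  simpa using this

lemma ff_hasDeriv {τ : ℝ} (hτ : 1 < τ) : HasDerivAt ff (f1 τ) τ := by
  have hτ0 : τ ≠ 0 := by linarith
  have h := (u_hasDeriv τ).mul (gg_hasDeriv hτ)
  have heq : (Real.exp τ + τ * Real.exp τ) * gg τ + (τ * Real.exp τ) * (-(hh τ)) = f1 τ := by
    unfold f1 hh
    rw [Real.exp_neg]
    field_simp
    ring
  rw [heq] at h
  exact h

lemma f1_hasDeriv {τ : ℝ} (hτ : 1 < τ) : HasDerivAt f1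
    ((2 * Real.exp τ + τ * Real.exp τ) * gg τ
      - (Real.exp τ + τ * Real.exp τ) * hh τ + 1/τ^2) τ := by
  have hτ0 : τ ≠ 0 := by linarith
  have hv : HasDerivAt (fun t => Real.exp t + t * Real.exp t)
      (2 * Real.exp τ + τ * Real.exp τ) τ := by
    have := (Real.hasDerivAt_exp τ).fun_add (u_hasDeriv τ)
    convert this using 1 <;> first | rfl | ring
  have h1 := hv.fun_mul (gg_hasDeriv hτ)
  have h2 : HasDerivAt (fun t : ℝ => 1/t) (-(1/τ^2)) τ := by
    have := hasDerivAt_inv hτ0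
    simpa [one_div] using this
  have := h1.fun_sub h2
  convert this using 1
  all_goals first | rfl | ring

/-- There exists a nontrivial solution `f` of the ODE `τ(σ'' − σ') = σ` on `(1,∞)`
with `f(τ) = O(1/τ)` as `τ → ∞`, i.e. `|f(τ)| ≤ C/τ` for large `τ`. -/
theorem stmt7 :
    ∃ f : ℝ → ℝ,
      (∀ τ : ℝ, 1 < τ → τ * (deriv (deriv f) τ - deriv f τ) = f τ)
      ∧ (∃ τ₀ : ℝ, 1 < τ₀ ∧ f τ₀ ≠ 0)
      ∧ ∃ C τ₁ : ℝ, 1 < τ₁ ∧ ∀ τ : ℝ, τ₁ ≤ τ → |f τ| ≤ C / τ := by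
  refine ⟨ff, ?_, ⟨2, by norm_num, ?_⟩, 1, 2, by norm_num, ?_⟩
  · intro τ hτ
    have hτ0 : τ ≠ 0 := by linarith
    have h1 : deriv ff τ = f1 τ := (ff_hasDeriv hτ).deriv
    have hev : deriv ff =ᶠ[𝓝 τ] f1 := by
      filter_upwards [Ioi_mem_nhds hτ] with t ht
      exact (ff_hasDeriv ht).deriv
    have h2 : deriv (deriv ff) τ
        = (2 * Real.exp τ + τ * Real.exp τ) * gg τ
          - (Real.exp τ + τ * Real.exp τ) * hh τ + 1/τ^2 := by
      rw [hev.deriv_eq]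
      exact (f1_hasDeriv hτ).deriv
    rw [h1, h2]
    unfold ff f1 hh
    rw [Real.exp_neg]
    have he : Real.exp τ ≠ 0 := (Real.exp_pos τ).ne'
    field_simp
    ring
  · have := gg_pos
    unfold ff
    positivity
  · intro τ hτ
    have hτ0 : (0:ℝ) < τ := by linarith
    have hnn : 0 ≤ ff τ := by
      unfold ff
      have := gg_nonneg τ
      positivity
    rw [abs_of_nonneg hnn]
    have hb := gg_le (show (1:ℝ) ≤ τ by linarith)
    calc ff τ ≤ τ * Real.exp τ * (Real.exp (-τ) / τ ^ 2) := by
          apply mul_le_mul_of_nonneg_left hb (by positivity)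
      _ = 1 / τ := by
          rw [Real.exp_neg]
          have he : Real.exp τ ≠ 0 := (Real.exp_pos τ).ne'
          field_simp
end
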